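/- Let M and N be the simple cuspidal sl(2,ℂ)-modules N(a) and N(b) respectively (a,b ∈ (ℂ∖ℤ)²). If M and N are not isomorphic, then every cocycle from M to N is a coboundary; equivalently, every extension 0 → N → V → M → 0 of weight sl(2,ℂ)-modules splits. -/

import Mathlib

/-- The action of `H` on the module `N(a)` (basis `x(k) = Finsupp.single k 1`, `k ∈ ℤ`):
`H · x(k) = (a₁ - a₂ + 2k) x(k)`. -/
noncomputable def sl2H (a₁ a₂ : ℂ) : Module.End ℂ (ℤ →₀ ℂ) :=
  Finsupp.lsum ℂ fun k : ℤ => (a₁ - a₂ + 2 * (k : ℂ)) • Finsupp.lsingle k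

/-- The action of `X⁺` on `N(a)`: `X⁺ · x(k) = (a₂ - k) x(k+1)`. -/
noncomputable def sl2E (a₂ : ℂ) : Module.End ℂ (ℤ →₀ ℂ) :=
  Finsupp.lsum ℂ fun k : ℤ => (a₂ - (k : ℂ)) • Finsupp.lsingle (k + 1)

/-- The action of `X⁻` on `N(a)`: `X⁻ · x(k) = (a₁ + k) x(k-1)`. -/
noncomputable def sl2F (a₁ : ℂ) : Module.End ℂ (ℤ →₀ ℂ) :=
  Finsupp.lsum ℂ fun k : ℤ => (a₁ + (k : ℂ)) • Finsupp.lsingle (k - 1)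

lemma sl2H_single (a₁ a₂ : ℂ) (k : ℤ) (c : ℂ) :
    sl2H a₁ a₂ (Finsupp.single k c) = (a₁ - a₂ + 2 * (k:ℂ)) • Finsupp.single k c := by
  rw [sl2H, Finsupp.lsum_single]; simp

lemma sl2E_single (a₂ : ℂ) (k : ℤ) (c : ℂ) :
    sl2E a₂ (Finsupp.single k c) = (a₂ - (k:ℂ)) • Finsupp.single (k+1) c := by
  rw [sl2E, Finsupp.lsum_single]; simp

lemma sl2F_single (a₁ : ℂ) (k : ℤ) (c : ℂ) :
    sl2F a₁ (Finsupp.single k c) = (a₁ + (k:ℂ)) • Finsupp.single (k-1) c := by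
  rw [sl2F, Finsupp.lsum_single]; simp

lemma rel_he (a₁ a₂ : ℂ) :
    sl2H a₁ a₂ * sl2E a₂ - sl2E a₂ * sl2H a₁ a₂ = sl2E a₂ + sl2E a₂ := by
  apply Finsupp.lhom_ext; intro k c
  simp only [LinearMap.sub_apply, LinearMap.add_apply, Module.End.mul_apply,
    sl2H_single, sl2E_single, map_smul, smul_smul]
  rw [← sub_smul, ← add_smul]; congr 1; push_cast; ring

lemma rel_hf (a₁ a₂ : ℂ) :
    sl2H a₁ a₂ * sl2F a₁ - sl2F a₁ * sl2H a₁ a₂ = -(sl2F a₁ + sl2F a₁) := by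
  apply Finsupp.lhom_ext; intro k c
  simp only [LinearMap.sub_apply, LinearMap.add_apply, Module.End.mul_apply, LinearMap.neg_apply,
    sl2H_single, sl2F_single, map_smul, smul_smul]
  rw [← sub_smul, ← add_smul, ← neg_smul]; congr 1; push_cast; ring

lemma rel_ef (a₁ a₂ : ℂ) :
    sl2E a₂ * sl2F a₁ - sl2F a₁ * sl2E a₂ = sl2H a₁ a₂ := by
  apply Finsupp.lhom_ext; intro k c
  simp only [LinearMap.sub_apply, Module.End.mul_apply,
    sl2H_single, sl2E_single, sl2F_single, map_smul, smul_smul, sub_add_cancel, add_sub_cancel_right]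
  rw [← sub_smul]; congr 1; push_cast; ring

lemma rel_cas (a₁ a₂ : ℂ) :
    sl2H a₁ a₂ * sl2H a₁ a₂ + (sl2E a₂ * sl2F a₁ + sl2F a₁ * sl2E a₂)
      + (sl2E a₂ * sl2F a₁ + sl2F a₁ * sl2E a₂)
      = ((a₁+a₂)^2 + 2*(a₁+a₂)) • (1 : Module.End ℂ (ℤ →₀ ℂ)) := by
  apply Finsupp.lhom_ext; intro k c
  simp only [LinearMap.add_apply, Module.End.mul_apply, LinearMap.smul_apply, Module.End.one_apply,
    sl2H_single, sl2E_single, sl2F_single, map_smul, smul_smul, sub_add_cancel, add_sub_cancel_right]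
  push_cast
  module

/-- diagonal inverse trick : eigenvector for a value outside the spectrum vanishes -/
lemma eig_vanish (b₁ b₂ c : ℂ) (hc : ∀ j : ℤ, b₁ - b₂ + 2 * (j:ℂ) ≠ c)
    (v : ℤ →₀ ℂ) (hv : sl2H b₁ b₂ v = c • v) : v = 0 := by
  have key : (Finsupp.lsum ℂ fun j : ℤ => (b₁ - b₂ + 2*(j:ℂ) - c)⁻¹ • Finsupp.lsingle j) ∘ₗ
      (sl2H b₁ b₂ - c • (1 : Module.End ℂ (ℤ →₀ ℂ))) = LinearMap.id := by
    apply Finsupp.lhom_ext; intro j d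
    simp only [LinearMap.comp_apply, LinearMap.sub_apply, LinearMap.smul_apply,
      Module.End.one_apply, sl2H_single, LinearMap.id_apply, map_sub, map_smul,
      Finsupp.lsum_single, Finsupp.lsingle_apply]
    rw [← sub_smul, smul_smul]
    rw [mul_inv_cancel₀ (sub_ne_zero.mpr (hc j)), one_smul]
  have h0 : (sl2H b₁ b₂ - c • (1 : Module.End ℂ (ℤ →₀ ℂ))) v = 0 := by
    simp only [LinearMap.sub_apply, LinearMap.smul_apply, Module.End.one_apply, hv, sub_self]
  calc v = LinearMap.id (R := ℂ) v := rfl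
    _ = _ := (LinearMap.congr_fun key v).symm
    _ = 0 := by rw [LinearMap.comp_apply, h0, map_zero]

lemma op_vanish (a₁ a₂ b₁ b₂ t : ℂ) (u : Module.End ℂ (ℤ →₀ ℂ))
    (hrel : sl2H b₁ b₂ * u - u * sl2H a₁ a₂ = t • u)
    (hne : ∀ j k : ℤ, b₁ - b₂ + 2*(j:ℂ) ≠ a₁ - a₂ + 2*(k:ℂ) + t) : u = 0 := by
  apply Finsupp.lhom_ext; intro k c
  have h1 := LinearMap.congr_fun hrel (Finsupp.single k c)
  simp only [LinearMap.sub_apply, Module.End.mul_apply, LinearMap.smul_apply,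
    sl2H_single, map_smul] at h1
  have h2 : sl2H b₁ b₂ (u (Finsupp.single k c)) =
      (a₁ - a₂ + 2*(k:ℂ) + t) • u (Finsupp.single k c) := by
    rw [add_smul]; rw [sub_eq_iff_eq_add] at h1; rw [h1]; abel
  have h3 := eig_vanish b₁ b₂ _ (fun j => hne j k) _ h2
  simpa using h3

/-- solving the `H` equation when the weight supports are disjoint -/
lemma solveH (a₁ a₂ b₁ b₂ : ℂ)
    (hne : ∀ j k : ℤ, b₁ - b₂ + 2*(j:ℂ) ≠ a₁ - a₂ + 2*(k:ℂ))
    (cH : Module.End ℂ (ℤ →₀ ℂ)) :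
    ∃ φ : Module.End ℂ (ℤ →₀ ℂ), sl2H b₁ b₂ * φ - φ * sl2H a₁ a₂ = cH := by
  set D : ℤ → Module.End ℂ (ℤ →₀ ℂ) := fun k =>
    Finsupp.lsum ℂ fun j : ℤ => (b₁ - b₂ + 2*(j:ℂ) - (a₁ - a₂ + 2*(k:ℂ)))⁻¹ • Finsupp.lsingle j
    with hD
  have hDk : ∀ k : ℤ, ∀ v : ℤ →₀ ℂ,
      sl2H b₁ b₂ (D k v) - (a₁ - a₂ + 2*(k:ℂ)) • D k v = v := by
    intro k
    have : sl2H b₁ b₂ ∘ₗ D k - (a₁ - a₂ + 2*(k:ℂ)) • D k = LinearMap.id := by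
      apply Finsupp.lhom_ext; intro j d
      simp only [LinearMap.sub_apply, LinearMap.comp_apply, LinearMap.smul_apply, hD,
        Finsupp.lsum_single, Finsupp.lsingle_apply, map_smul, sl2H_single, LinearMap.id_apply,
        smul_smul]
      have hx : b₁ - b₂ + 2*(j:ℂ) - (a₁ - a₂ + 2*(k:ℂ)) ≠ 0 := sub_ne_zero.mpr (hne j k)
      rw [← sub_smul]
      rw [show (b₁ - b₂ + 2*(j:ℂ) - (a₁ - a₂ + 2*(k:ℂ)))⁻¹ * (b₁ - b₂ + 2*(j:ℂ))
          - (a₁ - a₂ + 2*(k:ℂ)) * (b₁ - b₂ + 2*(j:ℂ) - (a₁ - a₂ + 2*(k:ℂ)))⁻¹ = 1 from by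
        field_simp, one_smul]
    intro v
    have := LinearMap.congr_fun this v
    simpa using this
  refine ⟨Finsupp.lsum ℂ fun k : ℤ => ((D k) ∘ₗ cH) ∘ₗ Finsupp.lsingle k, ?_⟩
  apply Finsupp.lhom_ext; intro k c
  simp only [LinearMap.sub_apply, Module.End.mul_apply, Finsupp.lsum_single,
    LinearMap.comp_apply, Finsupp.lsingle_apply, sl2H_single, map_smul]
  exact hDk k (cH (Finsupp.single k c))



lemma casimir_cert {R : Type*} [Ring R] (h e f hp ep fp H E F z zp : R)
    (E1 : E + E = (H*e - ep*H) + (hp*E - E*h))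
    (E2 : -(F + F) = (H*f - fp*H) + (hp*F - F*h))
    (E3 : H = (E*f - fp*E) + (ep*F - F*e))
    (R1 : h*e - e*h = e + e) (R2 : h*f - f*h = -(f+f)) (R3 : e*f - f*e = h)
    (R1' : hp*ep - ep*hp = ep + ep) (R2' : hp*fp - fp*hp = -(fp+fp)) (R3' : ep*fp - fp*ep = hp)
    (C : h*h + (e*f + f*e) + (e*f + f*e) = z)
    (C' : hp*hp + (ep*fp + fp*ep) + (ep*fp + fp*ep) = zp) :
    (hp*(ep*F + ep*F + fp*E + fp*E + hp*H + E*f + E*f + F*e + F*e + H*h) - (ep*F + ep*F + fp*E + fp*E + hp*H + E*f + E*f + F*e + F*e + H*h)*h = zp*H - H*z) ∧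
    (ep*(ep*F + ep*F + fp*E + fp*E + hp*H + E*f + E*f + F*e + F*e + H*h) - (ep*F + ep*F + fp*E + fp*E + hp*H + E*f + E*f + F*e + F*e + H*h)*e = zp*E - E*z) ∧
    (fp*(ep*F + ep*F + fp*E + fp*E + hp*H + E*f + E*f + F*e + F*e + H*h) - (ep*F + ep*F + fp*E + fp*E + hp*H + E*f + E*f + F*e + F*e + H*h)*f = zp*F - F*z) := by
  have d1 : ((E+E) - ((H*e - ep*H) + (hp*E - E*h))) = 0 := sub_eq_zero_of_eq E1
  have d2 : ((-(F+F)) - ((H*f - fp*H) + (hp*F - F*h))) = 0 := sub_eq_zero_of_eq E2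
  have d3 : (H - ((E*f - fp*E) + (ep*F - F*e))) = 0 := sub_eq_zero_of_eq E3
  have dr1 : ((h*e - e*h) - (e+e)) = 0 := by rw [R1]; abel
  have dr2 : ((h*f - f*h) + (f+f)) = 0 := by rw [R2]; abel
  have dr3 : ((e*f - f*e) - h) = 0 := sub_eq_zero_of_eq R3
  have dr1' : ((hp*ep - ep*hp) - (ep+ep)) = 0 := by rw [R1']; abel
  have dr2' : ((hp*fp - fp*hp) + (fp+fp)) = 0 := by rw [R2']; abel
  have dr3' : ((ep*fp - fp*ep) - hp) = 0 := sub_eq_zero_of_eq R3'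
  have dg : ((h*h + (e*f + f*e) + (e*f + f*e)) - z) = 0 := sub_eq_zero_of_eq C
  have dg' : ((hp*hp + (ep*fp + fp*ep) + (ep*fp + fp*ep)) - zp) = 0 := sub_eq_zero_of_eq C'
  refine ⟨?_, ?_, ?_⟩
  · have k : (hp*(ep*F + ep*F + fp*E + fp*E + hp*H + E*f + E*f + F*e + F*e + H*h) - (ep*F + ep*F + fp*E + fp*E + hp*H + E*f + E*f + F*e + F*e + H*h)*h) - (zp*H - H*z) = 2*(((hp*ep - ep*hp) - (ep+ep))*F) + 2*(((hp*fp - fp*hp) + (fp+fp))*E) - 2*(ep*((-(F+F)) - ((H*f - fp*H) + (hp*F - F*h)))) - 2*(fp*((E+E) - ((H*e - ep*H) + (hp*E - E*h)))) - 2*(((E+E) - ((H*e - ep*H) + (hp*E - E*h)))*f) - 2*(((-(F+F)) - ((H*f - fp*H) + (hp*F - F*h)))*e) + 2*(E*((h*f - f*h) + (f+f))) + 2*(F*((h*e - e*h) - (e+e))) + ((hp*hp + (ep*fp + fp*ep) + (ep*fp + fp*ep)) - zp)*H - H*((h*h + (e*f + f*e) + (e*f + f*e)) - z) := by noncomm_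ring
    rw [d1, d2, dr1, dr2, dr1', dr2', dg, dg'] at k
    simp only [mul_zero, zero_mul, add_zero, zero_add, sub_zero, zero_sub, neg_zero, smul_zero] at k
    exact sub_eq_zero.mp k
  · have k : (ep*(ep*F + ep*F + fp*E + fp*E + hp*H + E*f + E*f + F*e + F*e + H*h) - (ep*F + ep*F + fp*E + fp*E + hp*H + E*f + E*f + F*e + F*e + H*h)*e) - (zp*E - E*z) = (-2)*(ep*(H - ((E*f - fp*E) + (ep*F - F*e)))) - 2*((H - ((E*f - fp*E) + (ep*F - F*e)))*e) + hp*((E+E) - ((H*e - ep*H) + (hp*E - E*h))) + ((E+E) - ((H*e - ep*H) + (hp*E - E*h)))*h + 2*(((ep*fp - fp*ep) - hp)*E) + 2*(E*((e*f - f*e) - h)) - ((hp*ep - ep*hp) - (ep+ep))*H - H*((h*e - e*h) - (e+e)) + ((hp*hp + (ep*fp + fp*ep) + (ep*fp + fp*ep)) - zp)*E - E*((h*h + (e*f + f*e) + (e*f + f*e)) - z) := by noncomm_ring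
    rw [d1, d3, dr1, dr3, dr1', dr3', dg, dg'] at k
    simp only [mul_zero, zero_mul, add_zero, zero_add, sub_zero, zero_sub, neg_zero, smul_zero] at k
    exact sub_eq_zero.mp k
  · have k : (fp*(ep*F + ep*F + fp*E + fp*E + hp*H + E*f + E*f + F*e + F*e + H*h) - (ep*F + ep*F + fp*E + fp*E + hp*H + E*f + E*f + F*e + F*e + H*h)*f) - (zp*F - F*z) = 2*(fp*(H - ((E*f - fp*E) + (ep*F - F*e)))) + 2*((H - ((E*f - fp*E) + (ep*F - F*e)))*f) + hp*((-(F+F)) - ((H*f - fp*H) + (hp*F - F*h))) + ((-(F+F)) - ((H*f - fp*H) + (hp*F - F*h)))*h - 2*(((ep*fp - fp*ep) - hp)*F) - 2*(F*((e*f - f*e) - h)) - ((hp*fp - fp*hp) + (fp+fp))*H - H*((h*f - f*h) + (f+f)) + ((hp*hp + (ep*fp + fp*ep) + (ep*fp + fp*ep)) - zp)*F - F*((h*h + (e*f + f*e) + (e*f + f*e)) - z) := by noncomm_ring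
    rw [d2, d3, dr2, dr3, dr2', dr3', dg, dg'] at k
    simp only [mul_zero, zero_mul, add_zero, zero_add, sub_zero, zero_sub, neg_zero, smul_zero] at k
    exact sub_eq_zero.mp k

lemma certE {R : Type*} [Ring R] (h e hp ep H E P : R)
    (E1 : E + E = (H*e - ep*H) + (hp*E - E*h))
    (R1 : h*e - e*h = e + e) (R1' : hp*ep - ep*hp = ep + ep)
    (X : H = hp*P - P*h) :
    hp*(E - (ep*P - P*e)) - (E - (ep*P - P*e))*h
      = (E - (ep*P - P*e)) + (E - (ep*P - P*e)) := by
  have d1 : (E + E) - ((H*e - ep*H) + (hp*E - E*h)) = 0 := sub_eq_zero_of_eq E1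
  have dr1 : (h*e - e*h) - (e+e) = 0 := sub_eq_zero_of_eq R1
  have dr1' : (hp*ep - ep*hp) - (ep+ep) = 0 := sub_eq_zero_of_eq R1'
  have dX : H - (hp*P - P*h) = 0 := sub_eq_zero_of_eq X
  have k : (hp*(E - (ep*P - P*e)) - (E - (ep*P - P*e))*h)
      - ((E - (ep*P - P*e)) + (E - (ep*P - P*e)))
      = -((E + E) - ((H*e - ep*H) + (hp*E - E*h)))
        - (H - (hp*P - P*h))*e + ep*(H - (hp*P - P*h))
        - ((hp*ep - ep*hp) - (ep+ep))*P + P*((h*e - e*h) - (e+e)) := by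
    noncomm_ring
  rw [d1, dr1, dr1', dX] at k
  simp only [mul_zero, zero_mul, add_zero, zero_add, sub_zero, zero_sub, neg_zero] at k
  exact sub_eq_zero.mp k

lemma certF {R : Type*} [Ring R] (h f hp fp H F P : R)
    (E2 : -(F + F) = (H*f - fp*H) + (hp*F - F*h))
    (R2 : h*f - f*h = -(f + f)) (R2' : hp*fp - fp*hp = -(fp + fp))
    (X : H = hp*P - P*h) :
    hp*(F - (fp*P - P*f)) - (F - (fp*P - P*f))*h
      = -((F - (fp*P - P*f)) + (F - (fp*P - P*f))) := by
  have d2 : (-(F + F)) - ((H*f - fp*H) + (hp*F - F*h)) = 0 := sub_eq_zero_of_eq E2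
  have dr2 : (h*f - f*h) + (f+f) = 0 := by rw [R2]; abel
  have dr2' : (hp*fp - fp*hp) + (fp+fp) = 0 := by rw [R2']; abel
  have dX : H - (hp*P - P*h) = 0 := sub_eq_zero_of_eq X
  have k : (hp*(F - (fp*P - P*f)) - (F - (fp*P - P*f))*h)
      - (-((F - (fp*P - P*f)) + (F - (fp*P - P*f))))
      = -((-(F + F)) - ((H*f - fp*H) + (hp*F - F*h)))
        - (H - (hp*P - P*h))*f + fp*(H - (hp*P - P*h))
        - ((hp*fp - fp*hp) + (fp+fp))*P + P*((h*f - f*h) + (f+f)) := by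
    noncomm_ring
  rw [d2, dr2, dr2', dX] at k
  simp only [mul_zero, zero_mul, add_zero, zero_add, sub_zero, zero_sub, neg_zero] at k
  exact sub_eq_zero.mp k

/-- the coefficient sequence of the twisted isomorphism -/
noncomputable def twc (a₁ a₂ : ℂ) : ℤ → ℂ := fun k =>
  if 0 ≤ k then ∏ i ∈ Finset.range k.toNat, (-(a₁ + (i:ℂ) + 1)) / (a₂ - (i:ℂ))
  else (∏ i ∈ Finset.range (-k).toNat, (-(a₁ + ((-(i:ℤ)-1 : ℤ):ℂ) + 1)) / (a₂ - ((-(i:ℤ)-1 : ℤ):ℂ)))⁻¹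

lemma twc_factor_ne (a₁ a₂ : ℂ) (ha₁ : ∀ n : ℤ, a₁ ≠ (n : ℂ)) (ha₂ : ∀ n : ℤ, a₂ ≠ (n : ℂ))
    (t : ℤ) : (-(a₁ + (t:ℂ) + 1)) / (a₂ - (t:ℂ)) ≠ 0 := by
  apply div_ne_zero
  · intro hzero
    apply ha₁ (-t-1)
    push_cast
    linear_combination -hzero
  · intro hzero
    apply ha₂ t
    linear_combination hzero

lemma twc_ne_zero (a₁ a₂ : ℂ) (ha₁ : ∀ n : ℤ, a₁ ≠ (n : ℂ)) (ha₂ : ∀ n : ℤ, a₂ ≠ (n : ℂ))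
    (k : ℤ) : twc a₁ a₂ k ≠ 0 := by
  rw [twc]
  split
  · exact Finset.prod_ne_zero_iff.mpr fun i _ => twc_factor_ne a₁ a₂ ha₁ ha₂ i
  · exact inv_ne_zero (Finset.prod_ne_zero_iff.mpr fun i _ => twc_factor_ne a₁ a₂ ha₁ ha₂ _)

lemma twc_rec (a₁ a₂ : ℂ) (ha₁ : ∀ n : ℤ, a₁ ≠ (n : ℂ)) (ha₂ : ∀ n : ℤ, a₂ ≠ (n : ℂ))
    (k : ℤ) : twc a₁ a₂ (k+1) = ((-(a₁ + (k:ℂ) + 1)) / (a₂ - (k:ℂ))) * twc a₁ a₂ k := by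
  rcases le_or_gt 0 k with hk | hk
  · have h1 : (0:ℤ) ≤ k + 1 := by omega
    have h2 : (k+1).toNat = k.toNat + 1 := by omega
    rw [twc, twc, if_pos h1, if_pos hk, h2, Finset.prod_range_succ]
    have h5 : ((k.toNat : ℕ) : ℂ) = (k : ℂ) := by
      exact_mod_cast congrArg (fun n : ℤ => (n : ℂ)) (Int.toNat_of_nonneg hk)
    rw [h5, mul_comm]
  · rcases eq_or_lt_of_le (by omega : k ≤ -1) with he | hlt
    · subst he
      have : twc a₁ a₂ (-1) = ((-(a₁ + ((-1:ℤ):ℂ) + 1)) / (a₂ - ((-1:ℤ):ℂ)))⁻¹ := by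
        rw [twc, if_neg (by omega)]
        norm_num
      rw [show (-1:ℤ)+1 = 0 by ring, this]
      rw [twc]
      norm_num
      have hA : a₁ ≠ 0 := by simpa using ha₁ 0
      have hB : a₂ + 1 ≠ 0 := by
        intro hz; exact ha₂ (-1) (by push_cast; linear_combination hz)
      field_simp
    · -- k ≤ -2
      have h1 : ¬ (0:ℤ) ≤ k := by omega
      have h2 : ¬ (0:ℤ) ≤ k + 1 := by omega
      have h3 : (-k).toNat = (-(k+1)).toNat + 1 := by omega
      rw [twc, twc, if_neg h1, if_neg h2, h3, Finset.prod_range_succ]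
      have h4 : (-(((-(k+1)).toNat : ℤ)) - 1 : ℤ) = k := by omega
      rw [h4, mul_inv_rev, mul_inv_cancel_left₀ (twc_factor_ne a₁ a₂ ha₁ ha₂ k)]

lemma shift_iso (a₁ a₂ b₁ b₂ : ℂ) (m : ℤ) (hb1 : b₁ = a₁ + m) (hb2 : b₂ = a₂ - m) :
    ∃ e : (ℤ →₀ ℂ) ≃ₗ[ℂ] (ℤ →₀ ℂ),
      (∀ v, e (sl2H a₁ a₂ v) = sl2H b₁ b₂ (e v)) ∧
      (∀ v, e (sl2E a₂ v) = sl2E b₂ (e v)) ∧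
      (∀ v, e (sl2F a₁ v) = sl2F b₁ (e v)) := by
  refine ⟨Finsupp.domLCongr (Equiv.subRight m), ?_, ?_, ?_⟩
  · intro v
    have key : (Finsupp.domLCongr (R := ℂ) (M := ℂ) (Equiv.subRight m)).toLinearMap ∘ₗ sl2H a₁ a₂
        = sl2H b₁ b₂ ∘ₗ (Finsupp.domLCongr (Equiv.subRight m)).toLinearMap := by
      apply Finsupp.lhom_ext; intro k c
      simp only [LinearMap.comp_apply, LinearEquiv.coe_coe, sl2H_single, map_smul,
        Finsupp.domLCongr_single, Equiv.subRight_apply]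
      congr 1
      rw [hb1, hb2]; push_cast; ring
    exact LinearMap.congr_fun key v
  · intro v
    have key : (Finsupp.domLCongr (R := ℂ) (M := ℂ) (Equiv.subRight m)).toLinearMap ∘ₗ sl2E a₂
        = sl2E b₂ ∘ₗ (Finsupp.domLCongr (Equiv.subRight m)).toLinearMap := by
      apply Finsupp.lhom_ext; intro k c
      simp only [LinearMap.comp_apply, LinearEquiv.coe_coe, sl2E_single, map_smul,
        Finsupp.domLCongr_single, Equiv.subRight_apply]
      rw [show k + 1 - m = k - m + 1 from by ring]
      congr 1
      rw [hb2]; push_cast; ring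
    exact LinearMap.congr_fun key v
  · intro v
    have key : (Finsupp.domLCongr (R := ℂ) (M := ℂ) (Equiv.subRight m)).toLinearMap ∘ₗ sl2F a₁
        = sl2F b₁ ∘ₗ (Finsupp.domLCongr (Equiv.subRight m)).toLinearMap := by
      apply Finsupp.lhom_ext; intro k c
      simp only [LinearMap.comp_apply, LinearEquiv.coe_coe, sl2F_single, map_smul,
        Finsupp.domLCongr_single, Equiv.subRight_apply]
      rw [show k - 1 - m = k - m - 1 from by ring]
      congr 1
      rw [hb1]; push_cast; ring
    exact LinearMap.congr_fun key v

lemma twisted_iso (a₁ a₂ b₁ b₂ : ℂ) (ha₁ : ∀ n : ℤ, a₁ ≠ (n : ℂ)) (ha₂ : ∀ n : ℤ, a₂ ≠ (n : ℂ))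
    (m : ℤ) (hb1 : b₁ = -1 - a₂ + m) (hb2 : b₂ = -1 - a₁ - m) :
    ∃ e : (ℤ →₀ ℂ) ≃ₗ[ℂ] (ℤ →₀ ℂ),
      (∀ v, e (sl2H a₁ a₂ v) = sl2H b₁ b₂ (e v)) ∧
      (∀ v, e (sl2E a₂ v) = sl2E b₂ (e v)) ∧
      (∀ v, e (sl2F a₁ v) = sl2F b₁ (e v)) := by
  have hrecm : ∀ k : ℤ, (a₂ - (k:ℂ)) * twc a₁ a₂ (k+1) = -(a₁ + (k:ℂ) + 1) * twc a₁ a₂ k := by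
    intro k
    have hden : a₂ - (k:ℂ) ≠ 0 := sub_ne_zero.mpr (ha₂ k)
    rw [twc_rec a₁ a₂ ha₁ ha₂ k]
    field_simp
  set A : Module.End ℂ (ℤ →₀ ℂ) :=
    Finsupp.lsum ℂ (fun k : ℤ => twc a₁ a₂ k • Finsupp.lsingle (k - m)) with hA
  set B : Module.End ℂ (ℤ →₀ ℂ) :=
    Finsupp.lsum ℂ (fun k : ℤ => (twc a₁ a₂ (k + m))⁻¹ • Finsupp.lsingle (k + m)) with hB
  have hA_single : ∀ (k : ℤ) (c : ℂ), A (Finsupp.single k c) = twc a₁ a₂ k • Finsupp.single (k-m) c := by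
    intro k c; rw [hA, Finsupp.lsum_single]; simp
  have hB_single : ∀ (k : ℤ) (c : ℂ),
      B (Finsupp.single k c) = (twc a₁ a₂ (k+m))⁻¹ • Finsupp.single (k+m) c := by
    intro k c; rw [hB, Finsupp.lsum_single]; simp
  have hAB : A ∘ₗ B = LinearMap.id := by
    apply Finsupp.lhom_ext; intro k c
    simp only [LinearMap.comp_apply, hB_single, map_smul, hA_single, LinearMap.id_apply,
      smul_smul, add_sub_cancel_right]
    rw [inv_mul_cancel₀ (twc_ne_zero a₁ a₂ ha₁ ha₂ (k+m)), one_smul]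
  have hBA : B ∘ₗ A = LinearMap.id := by
    apply Finsupp.lhom_ext; intro k c
    simp only [LinearMap.comp_apply, hA_single, map_smul, hB_single, LinearMap.id_apply,
      smul_smul, sub_add_cancel]
    rw [mul_inv_cancel₀ (twc_ne_zero a₁ a₂ ha₁ ha₂ k), one_smul]
  refine ⟨LinearEquiv.ofLinear A B hAB hBA, ?_, ?_, ?_⟩
  · intro v
    have key : A ∘ₗ sl2H a₁ a₂ = sl2H b₁ b₂ ∘ₗ A := by
      apply Finsupp.lhom_ext; intro k c
      simp only [LinearMap.comp_apply, sl2H_single, map_smul, hA_single, smul_smul]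
      congr 1
      rw [hb1, hb2]; push_cast; ring
    simpa only [LinearEquiv.ofLinear_apply, LinearMap.comp_apply] using LinearMap.congr_fun key v
  · intro v
    have key : A ∘ₗ sl2E a₂ = sl2E b₂ ∘ₗ A := by
      apply Finsupp.lhom_ext; intro k c
      simp only [LinearMap.comp_apply, sl2E_single, map_smul, hA_single, smul_smul]
      rw [show k + 1 - m = k - m + 1 from by ring]
      congr 1
      rw [hb2]; push_cast
      linear_combination hrecm k
    simpa only [LinearEquiv.ofLinear_apply, LinearMap.comp_apply] using LinearMap.congr_fun key v
  · intro v
    have key : A ∘ₗ sl2F a₁ = sl2F b₁ ∘ₗ A := by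
      apply Finsupp.lhom_ext; intro k c
      simp only [LinearMap.comp_apply, sl2F_single, map_smul, hA_single, smul_smul]
      rw [show k - 1 - m = k - m - 1 from by ring]
      congr 1
      have h := hrecm (k-1)
      rw [sub_add_cancel] at h
      push_cast at h
      rw [hb1]; push_cast
      linear_combination h
    simpa only [LinearEquiv.ofLinear_apply, LinearMap.comp_apply] using LinearMap.congr_fun key v

/-- Grantcharov–Serganova.  Let `M = N(a)` and `N = N(b)` be simple
cuspidal `sl(2,ℂ)`-modules (`a, b ∈ (ℂ ∖ ℤ)²`).  If `M` and `N` are not isomorphic as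
`sl(2,ℂ)`-modules, then every cocycle from `M` to `N` is a coboundary — equivalently,
every extension `0 → N → V → M → 0` of weight `sl(2,ℂ)`-modules splits.
A cocycle is given by its values `cH, cE, cF` on the basis `H, X⁺, X⁻` of `sl₂`, subject
to the relations `c(⁅X,Y⁆) = [c(X), Y] + [X, c(Y)]`, where
`[c(X), Y] = c(X) ∘ Y_M − Y_N ∘ c(X)`; it is a coboundary when `c(X) = [X, φ]`, i.e.
`c(X) = X_N ∘ φ − φ ∘ X_M`, for some linear map `φ : M → N`. -/
theorem stmt_17 (a₁ a₂ b₁ b₂ : ℂ)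
    (ha₁ : ∀ n : ℤ, a₁ ≠ (n : ℂ)) (ha₂ : ∀ n : ℤ, a₂ ≠ (n : ℂ))
    (hb₁ : ∀ n : ℤ, b₁ ≠ (n : ℂ)) (hb₂ : ∀ n : ℤ, b₂ ≠ (n : ℂ))
    -- `N(a) ≇ N(b)`: there is no linear isomorphism intertwining the two actions
    (hniso : ¬ ∃ e : (ℤ →₀ ℂ) ≃ₗ[ℂ] (ℤ →₀ ℂ),
      (∀ v, e (sl2H a₁ a₂ v) = sl2H b₁ b₂ (e v)) ∧
      (∀ v, e (sl2E a₂ v) = sl2E b₂ (e v)) ∧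
      (∀ v, e (sl2F a₁ v) = sl2F b₁ (e v)))
    -- a cocycle from `M = N(a)` to `N = N(b)`
    (cH cE cF : (ℤ →₀ ℂ) →ₗ[ℂ] (ℤ →₀ ℂ))
    -- `c(⁅H,X⁺⁆) = 2 c(X⁺) = [c(H), X⁺] + [H, c(X⁺)]`
    (hcHE : (2 : ℂ) • cE =
      (cH ∘ₗ sl2E a₂ - sl2E b₂ ∘ₗ cH) + (sl2H b₁ b₂ ∘ₗ cE - cE ∘ₗ sl2H a₁ a₂))
    -- `c(⁅H,X⁻⁆) = -2 c(X⁻) = [c(H), X⁻] + [H, c(X⁻)]`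
    (hcHF : (-2 : ℂ) • cF =
      (cH ∘ₗ sl2F a₁ - sl2F b₁ ∘ₗ cH) + (sl2H b₁ b₂ ∘ₗ cF - cF ∘ₗ sl2H a₁ a₂))
    -- `c(⁅X⁺,X⁻⁆) = c(H) = [c(X⁺), X⁻] + [X⁺, c(X⁻)]`
    (hcEF : cH =
      (cE ∘ₗ sl2F a₁ - sl2F b₁ ∘ₗ cE) + (sl2E b₂ ∘ₗ cF - cF ∘ₗ sl2E a₂)) :
    -- the cocycle is a coboundary
    ∃ φ : (ℤ →₀ ℂ) →ₗ[ℂ] (ℤ →₀ ℂ),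
      cH = sl2H b₁ b₂ ∘ₗ φ - φ ∘ₗ sl2H a₁ a₂ ∧
      cE = sl2E b₂ ∘ₗ φ - φ ∘ₗ sl2E a₂ ∧
      cF = sl2F b₁ ∘ₗ φ - φ ∘ₗ sl2F a₁ := by
  classical
  have E1 : cE + cE = (cH * sl2E a₂ - sl2E b₂ * cH) + (sl2H b₁ b₂ * cE - cE * sl2H a₁ a₂) := by
    rw [← two_smul ℂ cE]; exact hcHE
  have E2 : -(cF + cF) = (cH * sl2F a₁ - sl2F b₁ * cH) + (sl2H b₁ b₂ * cF - cF * sl2H a₁ a₂) := by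
    rw [show -(cF + cF) = (-2 : ℂ) • cF from by module]
    exact hcHF
  have E3 : cH = (cE * sl2F a₁ - sl2F b₁ * cE) + (sl2E b₂ * cF - cF * sl2E a₂) := hcEF
  by_cases hm : ∃ m : ℤ, b₁ - b₂ = a₁ - a₂ + 2*(m:ℂ)
  · by_cases hκ : (b₁+b₂)^2 + 2*(b₁+b₂) = (a₁+a₂)^2 + 2*(a₁+a₂)
    · -- same Casimir eigenvalue and same weight lattice: the modules are isomorphic
      exfalso
      apply hniso
      obtain ⟨m, hm⟩ := hm
      have hss : ((b₁+b₂) - (a₁+a₂)) * ((b₁+b₂) + (a₁+a₂) + 2) = 0 := by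
        linear_combination hκ
      rcases mul_eq_zero.mp hss with h | h
      · exact shift_iso a₁ a₂ b₁ b₂ m (by linear_combination h/2 + hm/2)
          (by linear_combination h/2 - hm/2)
      · exact twisted_iso a₁ a₂ b₁ b₂ ha₁ ha₂ m (by linear_combination h/2 + hm/2)
          (by linear_combination h/2 - hm/2)
    · -- different Casimir eigenvalues : use the Casimir operator
      have hκ' : ((b₁+b₂)^2 + 2*(b₁+b₂)) - ((a₁+a₂)^2 + 2*(a₁+a₂)) ≠ 0 := sub_ne_zero.mpr hκ
      obtain ⟨K1, K2, K3⟩ := casimir_cert (sl2H a₁ a₂) (sl2E a₂) (sl2F a₁)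
        (sl2H b₁ b₂) (sl2E b₂) (sl2F b₁) cH cE cF
        (((a₁+a₂)^2 + 2*(a₁+a₂)) • (1 : Module.End ℂ (ℤ →₀ ℂ)))
        (((b₁+b₂)^2 + 2*(b₁+b₂)) • (1 : Module.End ℂ (ℤ →₀ ℂ)))
        E1 E2 E3 (rel_he a₁ a₂) (rel_hf a₁ a₂) (rel_ef a₁ a₂)
        (rel_he b₁ b₂) (rel_hf b₁ b₂) (rel_ef b₁ b₂) (rel_cas a₁ a₂) (rel_cas b₁ b₂)
      simp only [smul_mul_assoc, one_mul, mul_smul_comm, mul_one] at K1 K2 K3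
      set κ : ℂ := ((b₁+b₂)^2 + 2*(b₁+b₂)) - ((a₁+a₂)^2 + 2*(a₁+a₂)) with hκdef
      set ψ : Module.End ℂ (ℤ →₀ ℂ) :=
        sl2E b₂*cF + sl2E b₂*cF + sl2F b₁*cE + sl2F b₁*cE + sl2H b₁ b₂*cH
          + cE*sl2F a₁ + cE*sl2F a₁ + cF*sl2E a₂ + cF*sl2E a₂ + cH*sl2H a₁ a₂ with hψ
      have K1' : sl2H b₁ b₂ * ψ - ψ * sl2H a₁ a₂ = κ • cH := by rw [K1, hκdef]; module
      have K2' : sl2E b₂ * ψ - ψ * sl2E a₂ = κ • cE := by rw [K2, hκdef]; module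
      have K3' : sl2F b₁ * ψ - ψ * sl2F a₁ = κ • cF := by rw [K3, hκdef]; module
      refine ⟨κ⁻¹ • ψ, ?_, ?_, ?_⟩
      · show cH = sl2H b₁ b₂ * (κ⁻¹ • ψ) - (κ⁻¹ • ψ) * sl2H a₁ a₂
        rw [mul_smul_comm, smul_mul_assoc]
        calc cH = κ⁻¹ • (κ • cH) := by rw [smul_smul, inv_mul_cancel₀ hκ', one_smul]
          _ = κ⁻¹ • (sl2H b₁ b₂ * ψ - ψ * sl2H a₁ a₂) := by rw [K1']
          _ = κ⁻¹ • (sl2H b₁ b₂ * ψ) - κ⁻¹ • (ψ * sl2H a₁ a₂) := by module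
      · show cE = sl2E b₂ * (κ⁻¹ • ψ) - (κ⁻¹ • ψ) * sl2E a₂
        rw [mul_smul_comm, smul_mul_assoc]
        calc cE = κ⁻¹ • (κ • cE) := by rw [smul_smul, inv_mul_cancel₀ hκ', one_smul]
          _ = κ⁻¹ • (sl2E b₂ * ψ - ψ * sl2E a₂) := by rw [K2']
          _ = κ⁻¹ • (sl2E b₂ * ψ) - κ⁻¹ • (ψ * sl2E a₂) := by module
      · show cF = sl2F b₁ * (κ⁻¹ • ψ) - (κ⁻¹ • ψ) * sl2F a₁
        rw [mul_smul_comm, smul_mul_assoc]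
        calc cF = κ⁻¹ • (κ • cF) := by rw [smul_smul, inv_mul_cancel₀ hκ', one_smul]
          _ = κ⁻¹ • (sl2F b₁ * ψ - ψ * sl2F a₁) := by rw [K3']
          _ = κ⁻¹ • (sl2F b₁ * ψ) - κ⁻¹ • (ψ * sl2F a₁) := by module
  · -- the weight lattices are disjoint: kill `cH` and then everything
    push_neg at hm
    have hne0 : ∀ j k : ℤ, b₁ - b₂ + 2*(j:ℂ) ≠ a₁ - a₂ + 2*(k:ℂ) := by
      intro j k heq
      exact hm (k - j) (by push_cast; linear_combination heq)
    obtain ⟨φ, hφ⟩ := solveH a₁ a₂ b₁ b₂ hne0 cH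
    have hXE := certE (sl2H a₁ a₂) (sl2E a₂) (sl2H b₁ b₂) (sl2E b₂) cH cE φ
      E1 (rel_he a₁ a₂) (rel_he b₁ b₂) hφ.symm
    have hXF := certF (sl2H a₁ a₂) (sl2F a₁) (sl2H b₁ b₂) (sl2F b₁) cH cF φ
      E2 (rel_hf a₁ a₂) (rel_hf b₁ b₂) hφ.symm
    have hEzero : cE - (sl2E b₂*φ - φ*sl2E a₂) = 0 := by
      apply op_vanish a₁ a₂ b₁ b₂ 2
      · rw [two_smul]; exact hXE
      · intro j k heq
        exact hm (k - j + 1) (by push_cast; linear_combination heq)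
    have hFzero : cF - (sl2F b₁*φ - φ*sl2F a₁) = 0 := by
      apply op_vanish a₁ a₂ b₁ b₂ (-2)
      · rw [show ((-2:ℂ)) • (cF - (sl2F b₁*φ - φ*sl2F a₁))
            = -((cF - (sl2F b₁*φ - φ*sl2F a₁)) + (cF - (sl2F b₁*φ - φ*sl2F a₁))) from by module]
        exact hXF
      · intro j k heq
        exact hm (k - j - 1) (by push_cast; linear_combination heq)
    refine ⟨φ, ?_, ?_, ?_⟩
    · exact hφ.symm
    · exact sub_eq_zero.mp hEzero
    · exact sub_eq_zero.mp hFzero
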